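/- Let g : ℝ^d → ℝ ∪ {+∞} be proper, convex, lower semicontinuous and let f : ℝ^d → ℝ be a convex differentiable function whose gradient ∇f is L-Lipschitz. Let (x_k) be a proximal-gradient sequence with stepsizes α_k ∈ (0, 1/L], i.e. x_{k+1} = prox_{α_k g}(x_k − α_k ∇f(x_k)). Then for every global minimizer z of g + f and every k ≥ 0, ‖x_{k+1} − z‖ ≤ ‖x_k − z‖ (Fejér monotonicity with respect to the set of minimizers). -/

import Mathlib

open RealInnerProductSpace

section Aux

open RealInnerProductSpace

variable {E : Type*} [NormedAddCommGroup E] [InnerProductSpace ℝ E] [CompleteSpace E]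

/-- derivative of t ↦ f (x + t • v) -/
lemma line_hasDerivAt {f : E → ℝ} {g : E} {x v : E} (t : ℝ)
    (hf : HasGradientAt f g (x + t • v)) :
    HasDerivAt (fun s : ℝ => f (x + s • v)) ⟪g, v⟫ t := by
  have hline : HasDerivAt (fun s : ℝ => x + s • v) v t := by
    simpa using ((hasDerivAt_id t).smul_const v).const_add x
  have := (hasGradientAt_iff_hasFDerivAt.1 hf).comp_hasDerivAt t hline
  have h' : HasDerivAt (f ∘ fun s : ℝ => x + s • v) ⟪g, v⟫ t := by simpa using this
  exact h'

lemma convex_grad_ineq {f : E → ℝ} {f' : E → E}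
    (hf_convex : ConvexOn ℝ Set.univ f) (hf_diff : ∀ y, HasGradientAt f (f' y) y)
    (x y : E) : f x + ⟪f' x, y - x⟫ ≤ f y := by
  set v := y - x with hv
  have hder : HasDerivAt (fun s : ℝ => f (x + s • v)) ⟪f' x, v⟫ 0 := by
    have := line_hasDerivAt (f := f) (g := f' x) (x := x) (v := v) 0
    simpa using this (by simpa using hf_diff x)
  -- slope bound from convexity: for t ∈ (0,1], (f(x+t v) - f x)/t ≤ f y - f x
  have hslope : ∀ t : ℝ, 0 < t → t ≤ 1 → (f (x + t • v) - f x) / t ≤ f y - f x := by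
    intro t ht ht1
    have hc := hf_convex.2 (Set.mem_univ x) (Set.mem_univ y)
      (show (0:ℝ) ≤ 1 - t by linarith) ht.le (by ring)
    have hxt : (1 - t) • x + t • y = x + t • v := by
      rw [hv]; module
    rw [hxt] at hc
    simp only [smul_eq_mul] at hc
    rw [div_le_iff₀ ht]
    nlinarith
  have htend : Filter.Tendsto (fun t : ℝ => (f (x + t • v) - f x) / t)
      (nhdsWithin 0 (Set.Ioi 0)) (nhds ⟪f' x, v⟫) := by
    have := hder.tendsto_slope_zero_right
    simpa [slope_def_field, div_eq_inv_mul] using this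
  have hle : ⟪f' x, v⟫ ≤ f y - f x := by
    refine le_of_tendsto htend ?_
    filter_upwards [Ioc_mem_nhdsGT_of_mem (by norm_num : (0:ℝ) ∈ Set.Ico 0 1)] with t ht
    exact hslope t ht.1 ht.2
  linarith

lemma descent_lemma {f : E → ℝ} {f' : E → E} {L : ℝ}
    (hf_diff : ∀ y, HasGradientAt f (f' y) y)
    (hf_lip : ∀ x y, ‖f' x - f' y‖ ≤ L * ‖x - y‖)
    (x y : E) : f y ≤ f x + ⟪f' x, y - x⟫ + L / 2 * ‖y - x‖ ^ 2 := by
  set v := y - x with hv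
  set h : ℝ → ℝ := fun t => f (x + t • v) - t * ⟪f' x, v⟫ - L * ‖v‖ ^ 2 * t ^ 2 / 2 with hh
  have hder : ∀ t : ℝ, HasDerivAt h (⟪f' (x + t • v), v⟫ - ⟪f' x, v⟫ - L * ‖v‖ ^ 2 * t) t := by
    intro t
    have h1 : HasDerivAt (fun s : ℝ => f (x + s • v)) ⟪f' (x + t • v), v⟫ t :=
      line_hasDerivAt t (hf_diff _)
    have h2 : HasDerivAt (fun s : ℝ => s * ⟪f' x, v⟫) ⟪f' x, v⟫ t := by
      simpa using (hasDerivAt_id t).mul_const ⟪f' x, v⟫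
    have h3 : HasDerivAt (fun s : ℝ => L * ‖v‖ ^ 2 * s ^ 2 / 2) (L * ‖v‖ ^ 2 * t) t := by
      have := ((hasDerivAt_pow 2 t).const_mul (L * ‖v‖ ^ 2)).div_const 2
      exact this.congr_deriv (by norm_num; ring)
    exact (h1.sub h2).sub h3
  have hanti : AntitoneOn h (Set.Icc 0 1) := by
    apply antitoneOn_of_deriv_nonpos (convex_Icc 0 1)
    · exact fun t _ => ((hder t).continuousAt.continuousWithinAt)
    · exact fun t ht => ((hder t).differentiableAt.differentiableWithinAt)
    · intro t ht
      rw [interior_Icc] at ht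
      rw [(hder t).deriv]
      have hip : ⟪f' (x + t • v), v⟫ - ⟪f' x, v⟫ = ⟪f' (x + t • v) - f' x, v⟫ := by
        rw [inner_sub_left]
      have hb : ⟪f' (x + t • v) - f' x, v⟫ ≤ ‖f' (x + t • v) - f' x‖ * ‖v‖ :=
        real_inner_le_norm _ _
      have hlipb : ‖f' (x + t • v) - f' x‖ ≤ L * (t * ‖v‖) := by
        have := hf_lip (x + t • v) x
        simpa [norm_smul, abs_of_pos ht.1] using this
      have hv0 : (0:ℝ) ≤ ‖v‖ := norm_nonneg _
      nlinarith [ht.1.le]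
  have h10 : h 1 ≤ h 0 := hanti (by norm_num) (by norm_num) (by norm_num)
  have hx0 : x + (0:ℝ) • v = x := by simp
  have hx1 : x + (1:ℝ) • v = y := by rw [hv]; module
  simp only [hh, hx0, hx1] at h10
  norm_num at h10
  linarith

lemma small_t {c K : ℝ} (h : ∀ t : ℝ, 0 < t → t ≤ 1 → c ≤ t * K) : c ≤ 0 := by
  by_contra hc
  push_neg at hc
  have h1 := h 1 one_pos le_rfl
  rw [one_mul] at h1
  have hK : 0 < K := lt_of_lt_of_le hc h1
  have ht : 0 < c / (2 * K) := by positivity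
  have ht1 : c / (2 * K) ≤ 1 := by
    rw [div_le_one (by positivity)]; linarith
  have := h _ ht ht1
  rw [div_mul_eq_mul_div, mul_comm, mul_div_assoc] at this
  have : c ≤ c / 2 := by
    calc c ≤ K * (c / (2 * K)) := by linarith [h _ ht ht1]
    _ = c / 2 := by field_simp
  linarith

end Aux

/-- Convexity for an extended-real-valued function. -/
def ERealConvex {d : ℕ} (g : EuclideanSpace ℝ (Fin d) → EReal) : Prop :=
  ∀ x y : EuclideanSpace ℝ (Fin d), ∀ a b : ℝ, 0 ≤ a → 0 ≤ b → a + b = 1 →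
    g (a • x + b • y) ≤ (a : EReal) * g x + (b : EReal) * g y

/-- `g` is proper: it never takes the value `⊥` and is not identically `⊤`. -/
def ERealProper {d : ℕ} (g : EuclideanSpace ℝ (Fin d) → EReal) : Prop :=
  (∀ x, g x ≠ ⊥) ∧ (∃ x, g x ≠ ⊤)

/-- `p = prox_{αg}(y)`, i.e. `p` minimizes `z ↦ g z + (1/(2α))‖z - y‖²`. -/
def IsProx {d : ℕ} (g : EuclideanSpace ℝ (Fin d) → EReal) (α : ℝ)
    (y p : EuclideanSpace ℝ (Fin d)) : Prop :=
  ∀ z, g p + ((1 / (2 * α) * ‖p - y‖ ^ 2 : ℝ) : EReal)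
      ≤ g z + ((1 / (2 * α) * ‖z - y‖ ^ 2 : ℝ) : EReal)

lemma prox_vi {d : ℕ} {g : EuclideanSpace ℝ (Fin d) → EReal} {α : ℝ} (hα : 0 < α)
    (hconv : ERealConvex g) {y p z : EuclideanSpace ℝ (Fin d)} (hprox : IsProx g α y p)
    {a b : ℝ} (ha : g p = (a : EReal)) (hb : g z = (b : EReal)) :
    α * (a - b) ≤ ⟪p - y, z - p⟫ := by
  set N : ℝ := ‖p - y‖ ^ 2 with hN
  set I : ℝ := ⟪p - y, z - p⟫ with hI
  set M : ℝ := ‖z - p‖ ^ 2 with hM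
  have key : ∀ t : ℝ, 0 < t → t ≤ 1 → α * (a - b) - I ≤ t * (M / 2) := by
    intro t ht ht1
    have hw := hprox ((1 - t) • p + t • z)
    have hcv := hconv p z (1 - t) t (by linarith) ht.le (by ring)
    rw [ha, hb] at hcv
    have hcv' : g ((1 - t) • p + t • z) ≤ (((1 - t) * a + t * b : ℝ) : EReal) := by
      refine le_trans hcv ?_
      rw [EReal.coe_add, EReal.coe_mul, EReal.coe_mul]
    have hchain : ((a + 1 / (2 * α) * N : ℝ) : EReal)
        ≤ (((1 - t) * a + t * b + 1 / (2 * α) * ‖(1 - t) • p + t • z - y‖ ^ 2 : ℝ) : EReal) := by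
      rw [EReal.coe_add, EReal.coe_add]
      calc ((a : ℝ) : EReal) + ((1 / (2 * α) * N : ℝ) : EReal)
          = g p + ((1 / (2 * α) * ‖p - y‖ ^ 2 : ℝ) : EReal) := by rw [ha, hN]
        _ ≤ g ((1 - t) • p + t • z)
            + ((1 / (2 * α) * ‖(1 - t) • p + t • z - y‖ ^ 2 : ℝ) : EReal) := hw
        _ ≤ (((1 - t) * a + t * b : ℝ) : EReal)
            + ((1 / (2 * α) * ‖(1 - t) • p + t • z - y‖ ^ 2 : ℝ) : EReal) := by
            exact add_le_add_left hcv' _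
    rw [EReal.coe_le_coe_iff] at hchain
    have hwy : (1 - t) • p + t • z - y = (p - y) + t • (z - p) := by module
    have hexp : ‖(1 - t) • p + t • z - y‖ ^ 2 = N + 2 * (t * I) + t ^ 2 * M := by
      rw [hwy, hN, hI, hM, @norm_add_sq_real, real_inner_smul_right, norm_smul]
      simp [mul_pow, sq_abs]
      try ring
    rw [hexp] at hchain
    -- hchain : a + 1/(2α) * N ≤ (1-t)*a + t*b + 1/(2α)*(N + 2tI + t²M)
    have h2α : (0:ℝ) < 2 * α := by linarith
    have hdiv : t * (a - b) ≤ 1 / (2 * α) * (2 * (t * I) + t ^ 2 * M) := by nlinarith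
    rw [div_mul_eq_mul_div, le_div_iff₀ h2α] at hdiv
    nlinarith [hdiv, mul_pos ht ht]
  have := small_t key
  linarith


set_option maxHeartbeats 1000000 in
/-- Fejér monotonicity: the proximal-gradient iterates with stepsizes `0 < α_k ≤ 1/L`
do not increase the distance to any global minimizer of `g + f`. -/
theorem proxGrad_fejer {d : ℕ} {L : ℝ}
    (g : EuclideanSpace ℝ (Fin d) → EReal)
    (hg_proper : ERealProper g) (hg_convex : ERealConvex g)
    (hg_lsc : LowerSemicontinuous g)
    (f : EuclideanSpace ℝ (Fin d) → ℝ)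
    (f' : EuclideanSpace ℝ (Fin d) → EuclideanSpace ℝ (Fin d))
    (hf_convex : ConvexOn ℝ Set.univ f)
    (hf_diff : ∀ y, HasGradientAt f (f' y) y)
    (hf_lip : ∀ x y, ‖f' x - f' y‖ ≤ L * ‖x - y‖)
    (α : ℕ → ℝ) (hα : ∀ k, 0 < α k ∧ α k ≤ 1 / L)
    (x : ℕ → EuclideanSpace ℝ (Fin d))
    (hx : ∀ k, IsProx g (α k) (x k - α k • f' (x k)) (x (k + 1)))
    (z : EuclideanSpace ℝ (Fin d))
    (hz : ∀ w, g z + (f z : EReal) ≤ g w + (f w : EReal)) :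
    ∀ k, ‖x (k + 1) - z‖ ≤ ‖x k - z‖ := by
  intro k
  obtain ⟨hgbot, w₀, hw₀⟩ := hg_proper
  obtain ⟨hαk, hαk1⟩ := hα k
  have hL : 0 < L := by
    by_contra hL
    push_neg at hL
    have : 1 / L ≤ 0 := div_nonpos_of_nonneg_of_nonpos zero_le_one hL
    linarith
  have hαL : α k * L ≤ 1 := (le_div_iff₀ hL).1 hαk1
  set x0 := x k with hx0
  set p := x (k + 1) with hp
  set y := x0 - α k • f' x0 with hy
  -- g z is finite
  have hw₀r : g w₀ = ((g w₀).toReal : EReal) := (EReal.coe_toReal hw₀ (hgbot w₀)).symm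
  have hztop : g z ≠ ⊤ := by
    intro h
    have hzz := hz w₀
    rw [h, hw₀r, ← EReal.coe_add, EReal.top_add_coe, top_le_iff] at hzz
    exact EReal.coe_ne_top _ hzz
  set b : ℝ := (g z).toReal with hbdef
  have hb : g z = (b : EReal) := (EReal.coe_toReal hztop (hgbot z)).symm
  -- g p is finite
  have hptop : g p ≠ ⊤ := by
    intro h
    have hpx := hx k z
    rw [h, hb, ← EReal.coe_add, EReal.top_add_coe, top_le_iff] at hpx
    exact EReal.coe_ne_top _ hpx
  set a : ℝ := (g p).toReal with hadef
  have ha : g p = (a : EReal) := (EReal.coe_toReal hptop (hgbot p)).symm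
  -- prox variational inequality
  have hvi : α k * (a - b) ≤ ⟪p - y, z - p⟫ := prox_vi hαk hg_convex (hx k) ha hb
  -- optimality of z at p
  have hopt : b + f z ≤ a + f p := by
    have := hz p
    rw [ha, hb, ← EReal.coe_add, ← EReal.coe_add, EReal.coe_le_coe_iff] at this
    exact this
  -- convexity and descent
  have hcv : f x0 + ⟪f' x0, z - x0⟫ ≤ f z := convex_grad_ineq hf_convex hf_diff x0 z
  have hdc : f p ≤ f x0 + ⟪f' x0, p - x0⟫ + L / 2 * ‖p - x0‖ ^ 2 :=
    descent_lemma hf_diff hf_lip x0 p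
  -- expand the inner product
  have hpy : p - y = (p - x0) + α k • f' x0 := by rw [hy]; module
  have hinner : ⟪p - y, z - p⟫ = ⟪p - x0, z - p⟫ + α k * ⟪f' x0, z - p⟫ := by
    rw [hpy, inner_add_left, real_inner_smul_left]
  have hsplit : ⟪f' x0, z - x0⟫ - ⟪f' x0, p - x0⟫ = ⟪f' x0, z - p⟫ := by
    rw [← inner_sub_right]
    congr 1
    abel
  -- key lower bound
  have hkey : ⟪p - x0, z - p⟫ ≥ -(α k * L / 2) * ‖p - x0‖ ^ 2 := by
    rw [hinner] at hvi
    nlinarith [mul_le_mul_of_nonneg_left hopt hαk.le]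
  have hkey2 : ⟪p - x0, z - p⟫ ≥ -(1 / 2) * ‖p - x0‖ ^ 2 := by
    nlinarith [sq_nonneg ‖p - x0‖]
  -- norm identity
  have hid : ‖x0 - z‖ ^ 2 = ‖x0 - p‖ ^ 2 + 2 * ⟪x0 - p, p - z⟫ + ‖p - z‖ ^ 2 := by
    have : x0 - z = (x0 - p) + (p - z) := by abel
    rw [this, @norm_add_sq_real]
  have hflip : ⟪x0 - p, p - z⟫ = ⟪p - x0, z - p⟫ := by
    rw [show x0 - p = -(p - x0) by abel, show p - z = -(z - p) by abel, inner_neg_neg]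
  have hnp : ‖x0 - p‖ = ‖p - x0‖ := norm_sub_rev _ _
  have hsq : ‖p - z‖ ^ 2 ≤ ‖x0 - z‖ ^ 2 := by
    rw [hid, hflip, hnp]
    nlinarith [sq_nonneg ‖p - x0‖]
  nlinarith [norm_nonneg (p - z), norm_nonneg (x0 - z)]
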